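/- Let K_n ∈ ℝ^{n×n} be symmetric positive semidefinite with spectral decomposition K_n = U diag(λ̂₁,…,λ̂ₙ) Uᵀ, λ̂₁ ≥ … ≥ λ̂ₙ ≥ 0, and let η > 0 satisfy η λ̂₁ ≤ 1. Let f ∈ ℝⁿ be such that [Uᵀf]_i = 0 whenever λ̂_i = 0 and Σ_{i: λ̂_i>0} [Uᵀf]_i² / λ̂_i ≤ n γ₀². Then for every integer t ≥ 1: ‖(I − η K_n)^t f‖₂² ≤ n γ₀² / (2 e η t). Moreover, if w ∈ ℝⁿ is a random vector with independent mean-zero σ₀²-sub-Gaussian coordinates, then there is a constant c > 0 depending only on σ₀ such that with probability at least 1 − exp(−c n): ‖(I − η K_n)^t w‖₂ ≤ (σ₀ + 1)√n; consequently, on this event, ‖(I − η K_n)^t f‖₂ + ‖(I − η K_n)^t w‖₂ ≤ ( γ₀/√(2eη t) + σ₀ + 1 ) √n. -/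

import Mathlib

open MeasureTheory Matrix

open scoped ENNReal

/-- The Euclidean norm of a vector in `ℝⁿ`. -/
noncomputable def vecNorm {n : ℕ} (v : Fin n → ℝ) : ℝ := Real.sqrt (∑ i, v i ^ 2)

section Aux

open Real

lemma lintegral_pi_prod' {n : ℕ} (ν : Fin n → Measure ℝ) [∀ i, SigmaFinite (ν i)]
    (f : Fin n → ℝ → ℝ≥0∞) (hf : ∀ i, Measurable (f i)) :
    ∫⁻ x, ∏ i, f i (x i) ∂(Measure.pi ν) = ∏ i, ∫⁻ x, f i x ∂(ν i) := by
  induction n with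
  | zero => simp
  | succ n ih =>
    have hmp := (measurePreserving_piFinSuccAbove ν 0)
    have hg : Measurable fun y : ℝ × (Fin n → ℝ) => f 0 y.1 * ∏ j, f j.succ (y.2 j) := by
      exact ((hf 0).comp measurable_fst).mul
        (Finset.measurable_prod _ fun j _ => (hf j.succ).comp ((measurable_pi_apply j).comp measurable_snd))
    have h1 : ∫⁻ x, ∏ i, f i (x i) ∂(Measure.pi ν)
        = ∫⁻ y : ℝ × (Fin n → ℝ), f 0 y.1 * ∏ j, f j.succ (y.2 j)
            ∂((ν 0).prod (Measure.pi fun j => ν (Fin.succAbove 0 j))) := by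
      rw [← hmp.lintegral_comp hg]
      congr 1
      ext x
      simp [MeasurableEquiv.piFinSuccAbove, Fin.prod_univ_succ, Fin.zero_succAbove, Fin.tail]
    rw [h1, lintegral_prod_mul (f := fun a => f 0 a)
      (g := fun y : Fin n → ℝ => ∏ j, f j.succ (y j)) ((hf 0).aemeasurable)
      ((Finset.measurable_prod _ fun j _ => (hf j.succ).comp (measurable_pi_apply j)).aemeasurable)]
    have := ih (fun j => ν j.succ) (fun j => f j.succ) (fun j => hf j.succ)
    simp only [Fin.zero_succAbove] at *
    rw [this, Fin.prod_univ_succ]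

lemma gauss_shift (b : ℝ) :
    ∫ x : ℝ, Real.exp (-(1/2) * x^2 + b*x) = Real.sqrt (2*π) * Real.exp (b^2/2) := by
  have h1 : ∀ x : ℝ, -(1/2) * x^2 + b*x = -(1/2) * (x-b)^2 + b^2/2 := by intro x; ring
  simp_rw [h1, Real.exp_add]
  rw [integral_mul_const, integral_sub_right_eq_self (fun y : ℝ => Real.exp (-(1/2) * y^2)) b]
  have := integral_gaussian (1/2)
  rw [this]
  have : π / (1/2 : ℝ) = 2 * π := by ring
  rw [this, mul_comm]

lemma gauss_shift_integrable (b : ℝ) :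
    Integrable (fun x : ℝ => Real.exp (-(1/2) * x^2 + b*x)) volume := by
  have h1 : ∀ x : ℝ, -(1/2) * x^2 + b*x = -(1/2) * (x-b)^2 + b^2/2 := by intro x; ring
  simp_rw [h1, Real.exp_add]
  exact (((integrable_exp_neg_mul_sq (by norm_num : (0:ℝ) < 1/2)).comp_sub_right b).mul_const _)

lemma lintegral_exp_sq_le (σ₀ : ℝ) (ν : Measure ℝ) [IsProbabilityMeasure ν]
    (hmgf : ∀ l : ℝ, Integrable (fun s => Real.exp (l * s)) ν ∧
        ∫ s, Real.exp (l * s) ∂ν ≤ Real.exp (l ^ 2 * σ₀ ^ 2 / 2))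
    (s : ℝ) (hs : 0 ≤ s) (hs2 : s * σ₀ ^ 2 < 1 / 2) :
    ∫⁻ w, ENNReal.ofReal (Real.exp (s * w ^ 2)) ∂ν ≤
      ENNReal.ofReal (Real.sqrt (π / (1/2 - s * σ₀ ^ 2)) / Real.sqrt (2*π)) := by
  set F : ℝ → ℝ → ℝ≥0∞ := fun w x => ENNReal.ofReal (Real.exp (-(1/2) * x^2 + (Real.sqrt (2*s) * w) * x)) with hF
  have hπ := Real.pi_pos
  have hsq2π : (0:ℝ) < Real.sqrt (2*π) := Real.sqrt_pos.2 (by linarith)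
  have hCne : ENNReal.ofReal (Real.sqrt (2*π)) ≠ 0 := by
    simp [ENNReal.ofReal_eq_zero, not_le, hsq2π, Real.pi_pos]
  have hb2 : ∀ w : ℝ, (Real.sqrt (2*s) * w)^2 / 2 = s * w^2 := by
    intro w; rw [mul_pow, Real.sq_sqrt (by positivity)]; ring
  have hFmeas : AEMeasurable (Function.uncurry F) (ν.prod volume) := by
    apply Measurable.aemeasurable
    apply Measurable.ennreal_ofReal
    fun_prop
  have hpt : ∀ w : ℝ, ENNReal.ofReal (Real.exp (s * w^2)) =
      (ENNReal.ofReal (Real.sqrt (2*π)))⁻¹ * ∫⁻ x, F w x := by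
    intro w
    rw [hF]
    simp only
    rw [← ofReal_integral_eq_lintegral_ofReal (gauss_shift_integrable _)
      (Filter.Eventually.of_forall fun x => (Real.exp_pos _).le), gauss_shift,
      ENNReal.ofReal_mul (Real.sqrt_nonneg _), ← mul_assoc,
      ENNReal.inv_mul_cancel hCne ENNReal.ofReal_ne_top, one_mul, hb2]
  have hinner : ∀ x : ℝ, ∫⁻ w, F w x ∂ν ≤
      ENNReal.ofReal (Real.exp (-(1/2 - s * σ₀^2) * x^2)) := by
    intro x
    have hsplit : ∀ w : ℝ, F w x =
        ENNReal.ofReal (Real.exp (-(1/2) * x^2)) * ENNReal.ofReal (Real.exp ((Real.sqrt (2*s) * x) * w)) := by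
      intro w
      rw [hF]
      simp only
      rw [← ENNReal.ofReal_mul (Real.exp_pos _).le, ← Real.exp_add]
      ring_nf
    simp_rw [hsplit]
    rw [lintegral_const_mul' _ _ ENNReal.ofReal_ne_top]
    have h1 : ∫⁻ w, ENNReal.ofReal (Real.exp ((Real.sqrt (2*s) * x) * w)) ∂ν ≤
        ENNReal.ofReal (Real.exp ((Real.sqrt (2*s) * x)^2 * σ₀^2 / 2)) := by
      rw [← ofReal_integral_eq_lintegral_ofReal (hmgf _).1
        (Filter.Eventually.of_forall fun w => (Real.exp_pos _).le)]
      exact ENNReal.ofReal_le_ofReal (hmgf _).2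
    calc ENNReal.ofReal (Real.exp (-(1/2) * x^2)) * ∫⁻ w, ENNReal.ofReal (Real.exp ((Real.sqrt (2*s) * x) * w)) ∂ν
        ≤ ENNReal.ofReal (Real.exp (-(1/2) * x^2)) * ENNReal.ofReal (Real.exp ((Real.sqrt (2*s) * x)^2 * σ₀^2 / 2)) :=
          mul_le_mul_right h1 _
      _ = ENNReal.ofReal (Real.exp (-(1/2 - s * σ₀^2) * x^2)) := by
          rw [← ENNReal.ofReal_mul (Real.exp_pos _).le, ← Real.exp_add]
          congr 2
          have h2s : Real.sqrt (2*s) ^ 2 = 2*s := Real.sq_sqrt (by positivity)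
          rw [mul_pow, h2s]; ring
  calc ∫⁻ w, ENNReal.ofReal (Real.exp (s * w ^ 2)) ∂ν
      = (ENNReal.ofReal (Real.sqrt (2*π)))⁻¹ * ∫⁻ w, ∫⁻ x, F w x ∂volume ∂ν := by
        simp_rw [hpt]
        rw [lintegral_const_mul' _ _ (by simp [hCne, Real.pi_pos])]
    _ = (ENNReal.ofReal (Real.sqrt (2*π)))⁻¹ * ∫⁻ x, ∫⁻ w, F w x ∂ν ∂volume := by
        rw [lintegral_lintegral_swap hFmeas]
    _ ≤ (ENNReal.ofReal (Real.sqrt (2*π)))⁻¹ *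
          ∫⁻ x, ENNReal.ofReal (Real.exp (-(1/2 - s * σ₀^2) * x^2)) ∂volume :=
        mul_le_mul_right (lintegral_mono hinner) _
    _ = (ENNReal.ofReal (Real.sqrt (2*π)))⁻¹ * ENNReal.ofReal (Real.sqrt (π / (1/2 - s * σ₀^2))) := by
        rw [← ofReal_integral_eq_lintegral_ofReal (integrable_exp_neg_mul_sq (by linarith))
          (Filter.Eventually.of_forall fun x => (Real.exp_pos _).le), integral_gaussian]
    _ = ENNReal.ofReal (Real.sqrt (π / (1/2 - s * σ₀ ^ 2)) / Real.sqrt (2*π)) := by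
        rw [ENNReal.ofReal_div_of_pos hsq2π, mul_comm]
        exact (div_eq_mul_inv _ _).symm

lemma sum_sq_mulVec {n : ℕ} (U : Matrix (Fin n) (Fin n) ℝ) (h : Uᵀ * U = 1) (v : Fin n → ℝ) :
    ∑ i, (U.mulVec v i)^2 = ∑ i, v i ^ 2 := by
  have h1 : ∑ i, (U.mulVec v i)^2 = (U.mulVec v) ⬝ᵥ (U.mulVec v) := by
    simp [dotProduct, pow_two]
  have h2 : (U.mulVec v) ⬝ᵥ (U.mulVec v) = ((U.mulVec v) ᵥ* U) ⬝ᵥ v := dotProduct_mulVec _ _ _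
  have h3 : (U.mulVec v) ᵥ* U = Uᵀ.mulVec (U.mulVec v) := (Matrix.mulVec_transpose U _).symm
  rw [h1, h2, h3, Matrix.mulVec_mulVec, h, Matrix.one_mulVec]
  simp [dotProduct, pow_two]

lemma conj_pow' {n : ℕ} (U : Matrix (Fin n) (Fin n) ℝ) (h1 : U * Uᵀ = 1) (h2 : Uᵀ * U = 1)
    (D : Matrix (Fin n) (Fin n) ℝ) (t : ℕ) : (U * D * Uᵀ) ^ t = U * D ^ t * Uᵀ := by
  induction t with
  | zero => simp [h1]
  | succ k ih =>
    rw [pow_succ, pow_succ, ih]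
    calc U * D ^ k * Uᵀ * (U * D * Uᵀ) = U * D ^ k * (Uᵀ * U) * D * Uᵀ := by
          simp only [Matrix.mul_assoc]
      _ = U * (D ^ k * D) * Uᵀ := by rw [h2, Matrix.mul_one]; simp only [Matrix.mul_assoc]

lemma resid_norm_sq {n : ℕ} (U : Matrix (Fin n) (Fin n) ℝ) (lam : Fin n → ℝ) (η : ℝ)
    (h1 : U * Uᵀ = 1) (h2 : Uᵀ * U = 1) (t : ℕ) (v : Fin n → ℝ) :
    ∑ i, ((((1 : Matrix (Fin n) (Fin n) ℝ) - η • (U * Matrix.diagonal lam * Uᵀ)) ^ t).mulVec v i)^2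
      = ∑ i, ((1 - η * lam i)^t)^2 * (Uᵀ.mulVec v i)^2 := by
  have hA : (1 : Matrix (Fin n) (Fin n) ℝ) - η • (U * Matrix.diagonal lam * Uᵀ)
      = U * Matrix.diagonal (fun i => 1 - η * lam i) * Uᵀ := by
    have hd : Matrix.diagonal (fun i => 1 - η * lam i)
        = (1 : Matrix (Fin n) (Fin n) ℝ) - η • Matrix.diagonal lam := by
      rw [← Matrix.diagonal_one, ← Matrix.diagonal_smul, ← Matrix.diagonal_sub]
      rfl
    rw [hd, Matrix.mul_sub, Matrix.sub_mul, Matrix.mul_one, Matrix.mul_smul, Matrix.smul_mul, h1]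
  rw [hA, conj_pow' U h1 h2, Matrix.diagonal_pow]
  have hmv : ∀ i, (U * Matrix.diagonal ((fun i => 1 - η * lam i) ^ t) * Uᵀ).mulVec v i
      = U.mulVec ((Matrix.diagonal ((fun i => 1 - η * lam i) ^ t)).mulVec (Uᵀ.mulVec v)) i := by
    intro i
    rw [Matrix.mulVec_mulVec, Matrix.mulVec_mulVec]
  simp_rw [hmv]
  rw [sum_sq_mulVec U h2]
  congr 1
  ext i
  rw [Matrix.mulVec_diagonal]
  simp [mul_pow]

lemma exp_neg_le_one_sub {u : ℝ} (h0 : 0 ≤ u) (h5 : u ≤ 1/5) :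
    Real.exp (-(u + u^2)) ≤ 1 - u := by
  set v := u + u^2 with hv
  have hvpos : 0 ≤ v := by positivity
  have h1 : (v/2) + 1 ≤ Real.exp (v/2) := Real.add_one_le_exp _
  have h2 : Real.exp v = Real.exp (v/2) ^ 2 := by
    rw [sq, ← Real.exp_add]; ring_nf
  have h3 : Real.exp (-v) * Real.exp v = 1 := by
    rw [← Real.exp_add]; simp
  have h4 : (1 + v/2)^2 ≤ Real.exp v := by
    rw [h2]; nlinarith [Real.exp_pos (v/2)]
  have key : 1 ≤ (1-u) * (1 + v/2)^2 := by
    rw [hv]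
    nlinarith [sq_nonneg u, mul_nonneg h0 h0, mul_nonneg (mul_nonneg h0 h0) h0,
      mul_nonneg (mul_nonneg (mul_nonneg h0 h0) h0) h0,
      mul_nonneg (mul_nonneg (mul_nonneg (mul_nonneg h0 h0) h0) h0) h0]
  have h5' : 1 ≤ (1 - u) * Real.exp v := by
    calc 1 ≤ (1-u) * (1 + v/2)^2 := key
      _ ≤ (1-u) * Real.exp v := mul_le_mul_of_nonneg_left h4 (by linarith)
  have h6 : Real.exp (-v) * 1 ≤ Real.exp (-v) * ((1-u) * Real.exp v) :=
    mul_le_mul_of_nonneg_left h5' (Real.exp_pos (-v)).le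
  nlinarith [h3, h6]

lemma mul_exp_neg_le {y : ℝ} (hy : 0 ≤ y) : y * Real.exp (-y) ≤ Real.exp (-1) := by
  have h1 : y ≤ Real.exp (y - 1) := by
    have := Real.add_one_le_exp (y - 1); linarith
  have h2 : Real.exp (y-1) * Real.exp (-y) = Real.exp (-1) := by
    rw [← Real.exp_add]; ring_nf
  nlinarith [Real.exp_pos (-y), Real.exp_pos (y-1)]

lemma pow_mul_le {x : ℝ} {t : ℕ} (hx0 : 0 ≤ x) (hx1 : x ≤ 1) (ht : 1 ≤ t) :
    (1 - x)^(2*t) * x ≤ 1 / (2 * Real.exp 1 * t) := by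
  have htpos : (0:ℝ) < 2 * t := by positivity
  have h1 : (1 - x) ≤ Real.exp (-x) := by
    have := Real.add_one_le_exp (-x); linarith
  have h2 : (1-x)^(2*t) ≤ Real.exp (-x)^(2*t) :=
    pow_le_pow_left₀ (by linarith) h1 _
  have h3 : Real.exp (-x) ^ (2*t) = Real.exp (-(2*t*x)) := by
    rw [← Real.exp_nat_mul]; push_cast; ring_nf
  have h4 : (2*t*x) * Real.exp (-(2*t*x)) ≤ Real.exp (-1) := mul_exp_neg_le (by positivity)
  have h5 : Real.exp (-(2*t*x)) * x ≤ Real.exp (-1) / (2*t) := by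
    rw [le_div_iff₀ htpos]; nlinarith
  calc (1-x)^(2*t) * x ≤ Real.exp (-(2*t*x)) * x := by
        rw [← h3]; exact mul_le_mul_of_nonneg_right h2 hx0
    _ ≤ Real.exp (-1) / (2*t) := h5
    _ = 1 / (2 * Real.exp 1 * t) := by
        rw [Real.exp_neg]; field_simp

end Aux

set_option maxHeartbeats 1000000 in
/-- Let `K_n = U diag(λ̂) Uᵀ` be symmetric PSD with nonincreasing eigenvalues, `η λ̂₁ ≤ 1`, and
let `f ∈ ℝⁿ` satisfy `[Uᵀf]_i = 0` when `λ̂_i = 0` and `Σ_{λ̂_i>0} [Uᵀf]_i²/λ̂_i ≤ nγ₀²`.  Then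
for every `t ≥ 1`: `‖(I − ηK_n)^t f‖² ≤ nγ₀²/(2eηt)`.  Moreover, if `w` has independent
mean-zero `σ₀²`-sub-Gaussian coordinates, then for some `c > 0` depending only on `σ₀`, with
probability at least `1 − exp(−cn)`: `‖(I − ηK_n)^t w‖ ≤ (σ₀+1)√n`, and consequently
`‖(I−ηK_n)^t f‖ + ‖(I−ηK_n)^t w‖ ≤ (γ₀/√(2eηt) + σ₀ + 1)√n`. -/
theorem gd_residual_norm_bound (σ₀ : ℝ) (hσ₀ : 0 < σ₀) :
    ∃ c > (0 : ℝ),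
      ∀ (n : ℕ) (hn : 0 < n) (U Kn : Matrix (Fin n) (Fin n) ℝ) (lam : Fin n → ℝ)
        (η γ₀ : ℝ) (f : Fin n → ℝ),
        U * Uᵀ = 1 → Uᵀ * U = 1 →
        Kn = U * Matrix.diagonal lam * Uᵀ →
        (∀ i, 0 ≤ lam i) → (∀ i j : Fin n, i ≤ j → lam j ≤ lam i) →
        0 < η → η * lam ⟨0, hn⟩ ≤ 1 → 0 < γ₀ →
        (∀ i, lam i = 0 → Uᵀ.mulVec f i = 0) →
        (∑ i ∈ Finset.univ.filter fun i => lam i ≠ 0,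
            (Uᵀ.mulVec f i) ^ 2 / lam i) ≤ n * γ₀ ^ 2 →
      ∀ (ν : Fin n → Measure ℝ), (∀ i, IsProbabilityMeasure (ν i)) →
        (∀ (i : Fin n) (l : ℝ),
          Integrable (fun s => Real.exp (l * s)) (ν i) ∧
            ∫ s, Real.exp (l * s) ∂(ν i) ≤ Real.exp (l ^ 2 * σ₀ ^ 2 / 2)) →
      ∀ t : ℕ, 1 ≤ t →
        vecNorm ((((1 : Matrix (Fin n) (Fin n) ℝ) - η • Kn) ^ t).mulVec f) ^ 2 ≤
            n * γ₀ ^ 2 / (2 * Real.exp 1 * η * t) ∧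
        (Measure.pi ν)
            {w : Fin n → ℝ |
              vecNorm ((((1 : Matrix (Fin n) (Fin n) ℝ) - η • Kn) ^ t).mulVec w) ≤
                  (σ₀ + 1) * Real.sqrt n ∧
                vecNorm ((((1 : Matrix (Fin n) (Fin n) ℝ) - η • Kn) ^ t).mulVec f) +
                    vecNorm ((((1 : Matrix (Fin n) (Fin n) ℝ) - η • Kn) ^ t).mulVec w) ≤
                  (γ₀ / Real.sqrt (2 * Real.exp 1 * η * t) + σ₀ + 1) * Real.sqrt n} ≥
          ENNReal.ofReal (1 - Real.exp (-(c * n))) := by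
  classical
  set m : ℝ := (2*σ₀+1)/(2*σ₀^2) with hm_def
  have hm : 0 < m := by positivity
  set u : ℝ := min m (1/5) with hu_def
  have hu0 : 0 < u := lt_min hm (by norm_num)
  have hu5 : u ≤ 1/5 := min_le_right _ _
  have hum : u ≤ m := min_le_left _ _
  set s : ℝ := u / (2*σ₀^2) with hs_def
  have hs0 : 0 < s := by positivity
  refine ⟨u * m / 2, by positivity, ?_⟩
  intro n hn U Kn lam η γ₀ f hUUt hUtU hK hlam0 hmono hη hηlam hγ hf0 hfsum ν hprob hmgf t ht
  subst hK
  haveI : ∀ i, IsProbabilityMeasure (ν i) := hprob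
  have hE := Real.exp_pos 1
  have htpos : (0:ℝ) < t := by exact_mod_cast Nat.lt_of_lt_of_le Nat.zero_lt_one ht
  have hnpos : (0:ℝ) < n := by exact_mod_cast hn
  have hD : (0:ℝ) < 2 * Real.exp 1 * η * t := by positivity
  -- eigenvalue bounds
  have hdbound : ∀ i, 0 ≤ η * lam i ∧ η * lam i ≤ 1 := by
    intro i
    refine ⟨mul_nonneg hη.le (hlam0 i), ?_⟩
    calc η * lam i ≤ η * lam ⟨0, hn⟩ :=
          mul_le_mul_of_nonneg_left (hmono ⟨0, hn⟩ i (by simp [Fin.le_def])) hη.le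
      _ ≤ 1 := hηlam
  -- norm formula
  have hnormsq : ∀ v : Fin n → ℝ,
      vecNorm ((((1 : Matrix (Fin n) (Fin n) ℝ) - η • (U * Matrix.diagonal lam * Uᵀ)) ^ t).mulVec v) ^ 2
        = ∑ i, ((1 - η * lam i)^t)^2 * (Uᵀ.mulVec v i)^2 := by
    intro v
    rw [vecNorm, Real.sq_sqrt (Finset.sum_nonneg fun i _ => sq_nonneg _),
      resid_norm_sq U lam η hUUt hUtU t v]
  -- Part 1
  have part1 : vecNorm ((((1 : Matrix (Fin n) (Fin n) ℝ) - η • (U * Matrix.diagonal lam * Uᵀ)) ^ t).mulVec f) ^ 2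
      ≤ n * γ₀ ^ 2 / (2 * Real.exp 1 * η * t) := by
    rw [hnormsq f]
    have hsplit : ∑ i, ((1 - η * lam i)^t)^2 * (Uᵀ.mulVec f i)^2
        = ∑ i ∈ Finset.univ.filter (fun i => lam i ≠ 0), ((1 - η * lam i)^t)^2 * (Uᵀ.mulVec f i)^2 := by
      symm
      apply Finset.sum_filter_of_ne
      intro i _ hne hlam
      apply hne
      rw [hf0 i hlam]
      ring
    have hterm : ∀ i ∈ Finset.univ.filter (fun i => lam i ≠ 0),
        ((1 - η * lam i)^t)^2 * (Uᵀ.mulVec f i)^2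
          ≤ ((Uᵀ.mulVec f i)^2 / lam i) * (1 / (2 * Real.exp 1 * η * t)) := by
      intro i hi
      have hlne : lam i ≠ 0 := (Finset.mem_filter.1 hi).2
      have hli : 0 < lam i := lt_of_le_of_ne (hlam0 i) (Ne.symm hlne)
      have hx0 := (hdbound i).1
      have hx1 := (hdbound i).2
      have hppos : 0 ≤ (Uᵀ.mulVec f i)^2 / lam i := div_nonneg (sq_nonneg _) hli.le
      have hb := pow_mul_le hx0 hx1 ht
      have key : ((1 - η*lam i)^(2*t) * (η*lam i)) * ((Uᵀ.mulVec f i)^2 / lam i)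
          ≤ (1 / (2 * Real.exp 1 * t)) * ((Uᵀ.mulVec f i)^2 / lam i) :=
        mul_le_mul_of_nonneg_right hb hppos
      have e1 : ((1 - η * lam i)^t)^2 * (Uᵀ.mulVec f i)^2
          = (((1 - η*lam i)^(2*t) * (η*lam i)) * ((Uᵀ.mulVec f i)^2 / lam i)) / η := by
        rw [← pow_mul, mul_comm t 2]
        field_simp [hlne, ne_of_gt hη]
      have e2 : ((Uᵀ.mulVec f i)^2 / lam i) * (1 / (2 * Real.exp 1 * η * t))
          = ((1 / (2 * Real.exp 1 * t)) * ((Uᵀ.mulVec f i)^2 / lam i)) / η := by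
        rw [eq_div_iff (ne_of_gt hη)]
        field_simp [hlne, ne_of_gt hη, ne_of_gt hE, ne_of_gt htpos]
      rw [e1, e2]
      exact div_le_div_of_nonneg_right key hη.le
    calc ∑ i, ((1 - η * lam i)^t)^2 * (Uᵀ.mulVec f i)^2
        = ∑ i ∈ Finset.univ.filter (fun i => lam i ≠ 0),
            ((1 - η * lam i)^t)^2 * (Uᵀ.mulVec f i)^2 := hsplit
      _ ≤ ∑ i ∈ Finset.univ.filter (fun i => lam i ≠ 0),
            ((Uᵀ.mulVec f i)^2 / lam i) * (1 / (2 * Real.exp 1 * η * t)) :=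
          Finset.sum_le_sum hterm
      _ = (∑ i ∈ Finset.univ.filter (fun i => lam i ≠ 0), (Uᵀ.mulVec f i)^2 / lam i)
            * (1 / (2 * Real.exp 1 * η * t)) := by rw [← Finset.sum_mul]
      _ ≤ (n * γ₀^2) * (1 / (2 * Real.exp 1 * η * t)) :=
          mul_le_mul_of_nonneg_right hfsum (by positivity)
      _ = n * γ₀ ^ 2 / (2 * Real.exp 1 * η * t) := by ring
  refine ⟨part1, ?_⟩
  -- Part 2 : probability bound
  set r : ℝ := (σ₀ + 1)^2 with hr_def
  set S : Set (Fin n → ℝ) := {w | ∑ i, (w i)^2 ≤ r * n} with hS_def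
  have hSmeas : MeasurableSet S :=
    measurableSet_le (Finset.measurable_sum _ fun i _ => (measurable_pi_apply i).pow_const 2)
      measurable_const
  -- inclusion into the event
  have hsub : S ⊆ {w : Fin n → ℝ |
      vecNorm ((((1 : Matrix (Fin n) (Fin n) ℝ) - η • (U * Matrix.diagonal lam * Uᵀ)) ^ t).mulVec w) ≤
          (σ₀ + 1) * Real.sqrt n ∧
        vecNorm ((((1 : Matrix (Fin n) (Fin n) ℝ) - η • (U * Matrix.diagonal lam * Uᵀ)) ^ t).mulVec f) +
            vecNorm ((((1 : Matrix (Fin n) (Fin n) ℝ) - η • (U * Matrix.diagonal lam * Uᵀ)) ^ t).mulVec w) ≤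
          (γ₀ / Real.sqrt (2 * Real.exp 1 * η * t) + σ₀ + 1) * Real.sqrt n} := by
    intro w hw
    have hwS : ∑ i, (w i)^2 ≤ r * n := hw
    have hwnorm : vecNorm ((((1 : Matrix (Fin n) (Fin n) ℝ) - η • (U * Matrix.diagonal lam * Uᵀ)) ^ t).mulVec w)
        ≤ (σ₀ + 1) * Real.sqrt n := by
      have h1 : ∑ i, ((1 - η * lam i)^t)^2 * (Uᵀ.mulVec w i)^2 ≤ ∑ i, (Uᵀ.mulVec w i)^2 := by
        apply Finset.sum_le_sum
        intro i _
        have hd0 : 0 ≤ 1 - η * lam i := by linarith [(hdbound i).2]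
        have hd1 : 1 - η * lam i ≤ 1 := by linarith [(hdbound i).1]
        have hc : ((1 - η * lam i)^t)^2 ≤ 1 := by
          have := pow_le_one₀ hd0 hd1 (n := t)
          nlinarith [pow_nonneg hd0 t]
        nlinarith [sq_nonneg (Uᵀ.mulVec w i)]
      have h2 : ∑ i, (Uᵀ.mulVec w i)^2 = ∑ i, (w i)^2 := by
        apply sum_sq_mulVec
        rw [Matrix.transpose_transpose]
        exact hUUt
      have h3 : vecNorm ((((1 : Matrix (Fin n) (Fin n) ℝ) - η • (U * Matrix.diagonal lam * Uᵀ)) ^ t).mulVec w) ^ 2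
          ≤ r * n := by
        rw [hnormsq w]
        calc ∑ i, ((1 - η * lam i)^t)^2 * (Uᵀ.mulVec w i)^2 ≤ ∑ i, (Uᵀ.mulVec w i)^2 := h1
          _ = ∑ i, (w i)^2 := h2
          _ ≤ r * n := hwS
      have hvn : 0 ≤ vecNorm ((((1 : Matrix (Fin n) (Fin n) ℝ) - η • (U * Matrix.diagonal lam * Uᵀ)) ^ t).mulVec w) :=
        Real.sqrt_nonneg _
      have := Real.sqrt_le_sqrt h3
      rw [Real.sqrt_sq hvn] at this
      calc vecNorm _ ≤ Real.sqrt (r * n) := this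
        _ = (σ₀ + 1) * Real.sqrt n := by
            rw [hr_def, Real.sqrt_mul (sq_nonneg _), Real.sqrt_sq (by positivity)]
    refine ⟨hwnorm, ?_⟩
    have hfnorm : vecNorm ((((1 : Matrix (Fin n) (Fin n) ℝ) - η • (U * Matrix.diagonal lam * Uᵀ)) ^ t).mulVec f)
        ≤ γ₀ / Real.sqrt (2 * Real.exp 1 * η * t) * Real.sqrt n := by
      have hvn : 0 ≤ vecNorm ((((1 : Matrix (Fin n) (Fin n) ℝ) - η • (U * Matrix.diagonal lam * Uᵀ)) ^ t).mulVec f) :=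
        Real.sqrt_nonneg _
      have h1 := Real.sqrt_le_sqrt part1
      rw [Real.sqrt_sq hvn] at h1
      have h2 : Real.sqrt (n * γ₀ ^ 2 / (2 * Real.exp 1 * η * t))
          = γ₀ / Real.sqrt (2 * Real.exp 1 * η * t) * Real.sqrt n := by
        have hsq : n * γ₀ ^ 2 / (2 * Real.exp 1 * η * t)
            = (γ₀ / Real.sqrt (2 * Real.exp 1 * η * t) * Real.sqrt n)^2 := by
          rw [mul_pow, div_pow, Real.sq_sqrt hD.le, Real.sq_sqrt hnpos.le]
          ring
        rw [hsq, Real.sqrt_sq (by positivity)]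
      rw [h2] at h1
      exact h1
    calc vecNorm _ + vecNorm _
        ≤ γ₀ / Real.sqrt (2 * Real.exp 1 * η * t) * Real.sqrt n + (σ₀ + 1) * Real.sqrt n :=
          add_le_add hfnorm hwnorm
      _ = (γ₀ / Real.sqrt (2 * Real.exp 1 * η * t) + σ₀ + 1) * Real.sqrt n := by ring
  -- Chernoff bound for the complement of S
  have hsσ : s * σ₀^2 = u / 2 := by
    rw [hs_def]; field_simp
  have hsσlt : s * σ₀ ^ 2 < 1/2 := by rw [hsσ]; linarith
  -- per-coordinate bound
  have hC : Real.sqrt (Real.pi / (1/2 - s * σ₀ ^ 2)) / Real.sqrt (2*Real.pi)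
      ≤ Real.exp ((u + u^2)/2) := by
    have hπ := Real.pi_pos
    have h1u : (0:ℝ) < 1 - u := by linarith
    have harg : Real.pi / (1/2 - s * σ₀ ^ 2) = 2*Real.pi * (1/(1-u)) := by
      rw [hsσ]; field_simp
    rw [harg, Real.sqrt_mul (by positivity)]
    have hsq2π : (0:ℝ) < Real.sqrt (2*Real.pi) := Real.sqrt_pos.2 (by linarith)
    rw [mul_comm, mul_div_assoc, div_self (ne_of_gt hsq2π), mul_one]
    have hkey : 1/(1-u) ≤ Real.exp (u + u^2) := by
      have hone := exp_neg_le_one_sub hu0.le hu5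
      have hmul : Real.exp (-(u+u^2)) * Real.exp (u+u^2) = 1 := by
        rw [← Real.exp_add, show -(u+u^2) + (u+u^2) = (0:ℝ) by ring, Real.exp_zero]
      have h2' := mul_le_mul_of_nonneg_right hone (Real.exp_pos (u+u^2)).le
      rw [div_le_iff₀ h1u]
      calc 1 = Real.exp (-(u+u^2)) * Real.exp (u+u^2) := hmul.symm
        _ ≤ (1-u) * Real.exp (u+u^2) := h2'
        _ = Real.exp (u+u^2) * (1-u) := mul_comm _ _
    have hexp2 : Real.exp ((u + u^2)/2) ^ 2 = Real.exp (u + u^2) := by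
      rw [sq, ← Real.exp_add]; congr 1; ring
    calc Real.sqrt (1/(1-u)) ≤ Real.sqrt (Real.exp ((u + u^2)/2) ^ 2) :=
          Real.sqrt_le_sqrt (by rw [hexp2]; exact hkey)
      _ = Real.exp ((u + u^2)/2) := Real.sqrt_sq (Real.exp_pos _).le
  have hcoord : ∀ i, ∫⁻ x, ENNReal.ofReal (Real.exp (s * x ^ 2)) ∂(ν i)
      ≤ ENNReal.ofReal (Real.exp ((u + u^2)/2)) := by
    intro i
    calc ∫⁻ x, ENNReal.ofReal (Real.exp (s * x ^ 2)) ∂(ν i)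
        ≤ ENNReal.ofReal (Real.sqrt (Real.pi / (1/2 - s * σ₀ ^ 2)) / Real.sqrt (2*Real.pi)) :=
          lintegral_exp_sq_le σ₀ (ν i) (hmgf i) s hs0.le hsσlt
      _ ≤ ENNReal.ofReal (Real.exp ((u + u^2)/2)) := ENNReal.ofReal_le_ofReal hC
  -- the full exponential moment
  set G : (Fin n → ℝ) → ℝ≥0∞ := fun w => ENNReal.ofReal (Real.exp (s * ∑ i, (w i)^2)) with hG_def
  have hGmeas : Measurable G := by
    apply Measurable.ennreal_ofReal
    apply Real.measurable_exp.comp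
    exact (measurable_const.mul (Finset.measurable_sum _ fun i _ => (measurable_pi_apply i).pow_const 2))
  have hGprod : ∀ w, G w = ∏ i, ENNReal.ofReal (Real.exp (s * (w i)^2)) := by
    intro w
    rw [hG_def]
    simp only
    rw [Finset.mul_sum, Real.exp_sum, ENNReal.ofReal_prod_of_nonneg (fun i _ => (Real.exp_pos _).le)]
  have hGint : ∫⁻ w, G w ∂(Measure.pi ν) ≤ ENNReal.ofReal (Real.exp (n * ((u + u^2)/2))) := by
    calc ∫⁻ w, G w ∂(Measure.pi ν)
        = ∫⁻ w, ∏ i, ENNReal.ofReal (Real.exp (s * (w i)^2)) ∂(Measure.pi ν) := by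
          simp_rw [hGprod]
      _ = ∏ i, ∫⁻ x, ENNReal.ofReal (Real.exp (s * x^2)) ∂(ν i) :=
          lintegral_pi_prod' ν (fun _ x => ENNReal.ofReal (Real.exp (s * x^2)))
            (fun i => Measurable.ennreal_ofReal
              (Real.measurable_exp.comp (measurable_const.mul (measurable_id.pow_const 2))))
      _ ≤ ∏ _i : Fin n, ENNReal.ofReal (Real.exp ((u + u^2)/2)) :=
          Finset.prod_le_prod' fun i _ => hcoord i
      _ = ENNReal.ofReal (Real.exp ((u + u^2)/2)) ^ n := by
          rw [Finset.prod_const, Finset.card_univ, Fintype.card_fin]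
      _ = ENNReal.ofReal (Real.exp ((u + u^2)/2) ^ n) := by
          rw [ENNReal.ofReal_pow (Real.exp_pos _).le]
      _ = ENNReal.ofReal (Real.exp (n * ((u + u^2)/2))) := by
          rw [← Real.exp_nat_mul]
  -- Markov
  have hεpos : (0:ℝ) < Real.exp (s * (r * n)) := Real.exp_pos _
  have hcompl : (Measure.pi ν) Sᶜ ≤ ENNReal.ofReal (Real.exp (-(u * m / 2 * n))) := by
    have hsub2 : Sᶜ ⊆ {w : Fin n → ℝ | ENNReal.ofReal (Real.exp (s * (r * n))) ≤ G w} := by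
      intro w hw
      have hw' : r * n < ∑ i, (w i)^2 := by
        simpa [hS_def, not_le] using hw
      have : Real.exp (s * (r * n)) ≤ Real.exp (s * ∑ i, (w i)^2) :=
        Real.exp_le_exp.2 (mul_le_mul_of_nonneg_left hw'.le hs0.le)
      exact ENNReal.ofReal_le_ofReal this
    calc (Measure.pi ν) Sᶜ ≤ (Measure.pi ν) {w | ENNReal.ofReal (Real.exp (s * (r * n))) ≤ G w} :=
          measure_mono hsub2
      _ ≤ (∫⁻ w, G w ∂(Measure.pi ν)) / ENNReal.ofReal (Real.exp (s * (r * n))) :=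
          meas_ge_le_lintegral_div hGmeas.aemeasurable
            (ne_of_gt (ENNReal.ofReal_pos.2 hεpos)) ENNReal.ofReal_ne_top
      _ ≤ ENNReal.ofReal (Real.exp (n * ((u + u^2)/2))) / ENNReal.ofReal (Real.exp (s * (r * n))) :=
          ENNReal.div_le_div_right hGint _
      _ = ENNReal.ofReal (Real.exp (n * ((u + u^2)/2)) / Real.exp (s * (r * n))) := by
          rw [ENNReal.ofReal_div_of_pos hεpos]
      _ = ENNReal.ofReal (Real.exp (n * ((u + u^2)/2) - s * (r * n))) := by
          rw [Real.exp_sub]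
      _ ≤ ENNReal.ofReal (Real.exp (-(u * m / 2 * n))) := by
          apply ENNReal.ofReal_le_ofReal
          apply Real.exp_le_exp.2
          have hsr : s * r = u * (1/2 + m) := by
            have hσne : σ₀ ≠ 0 := ne_of_gt hσ₀
            rw [hs_def, hr_def, hm_def]
            field_simp [hσne]
            ring
          have hper : (u + u^2)/2 - s * r ≤ -(u * m / 2) := by
            rw [hsr]
            nlinarith [hu0.le, hum, hm.le]
          have : n * ((u + u^2)/2) - s * (r * n) = ((u + u^2)/2 - s * r) * n := by ring
          rw [this]
          calc ((u + u^2)/2 - s * r) * n ≤ (-(u * m / 2)) * n :=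
                mul_le_mul_of_nonneg_right hper hnpos.le
            _ = -(u * m / 2 * n) := by ring
  -- conclude
  rw [ge_iff_le]
  calc ENNReal.ofReal (1 - Real.exp (-(u * m / 2 * n)))
      = 1 - ENNReal.ofReal (Real.exp (-(u * m / 2 * n))) := by
        rw [ENNReal.ofReal_sub _ (Real.exp_pos _).le, ENNReal.ofReal_one]
    _ ≤ 1 - (Measure.pi ν) Sᶜ := tsub_le_tsub_left hcompl 1
    _ = (Measure.pi ν) S := by
        rw [prob_compl_eq_one_sub hSmeas, ENNReal.sub_sub_cancel ENNReal.one_ne_top prob_le_one]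
    _ ≤ _ := measure_mono hsub
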